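/- Assume the pre-semi-frame conditions (SF3): φ₁[N₁·N₃] = M₁·N₂, φ₂[M₁·N₂] = M₃·M₂, and φ₃[N₁·N₃] = M₃·M₂, and let C ⊆ G₁ be a left coset of N₁·N₃. Then the union of the coset-shifted relative products over all atoms equals the universal relation: ⋃{R¹_a ⊗_C R²_b : a ∈ G₁⧸N₁, b ∈ G₂⧸N₂} = G₁ × G₃. -/

import Mathlib

open scoped Pointwise

namespace CosetRA

variable {G G' : Type*}

/-- The coset of `a : G ⧸ N` as a subset of `G`: `⟨a⟩ = {g : G | [g]_N = a}`. -/
def cosetOf [Group G] (N : Subgroup G) (a : G ⧸ N) : Set G :=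
  {g : G | (g : G ⧸ N) = a}

/-- Forward image `φ[S]` of a subset `S ⊆ G` under a quotient isomorphism. -/
def fwd [Group G] [Group G'] (N : Subgroup G) (M : Subgroup G')
    [N.Normal] [M.Normal] (φ : G ⧸ N ≃* G' ⧸ M) (S : Set G) : Set G' :=
  {h : G' | ∃ g ∈ S, φ (g : G ⧸ N) = (h : G' ⧸ M)}

/-- Inverse image `φ⁻¹[S']` of a subset `S' ⊆ G'` under a quotient isomorphism. -/
def bwd [Group G] [Group G'] (N : Subgroup G) (M : Subgroup G')
    [N.Normal] [M.Normal] (φ : G ⧸ N ≃* G' ⧸ M) (S' : Set G') : Set G :=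
  {g : G | ∃ h ∈ S', φ (g : G ⧸ N) = (h : G' ⧸ M)}

/-- The atomic relation `R_a = {(g,h) : [h]_M = φ([g]_N)·φ(a)}`. -/
def atom [Group G] [Group G'] (N : Subgroup G) (M : Subgroup G')
    [N.Normal] [M.Normal] (φ : G ⧸ N ≃* G' ⧸ M) (a : G ⧸ N) : Set (G × G') :=
  {p : G × G' | (p.2 : G' ⧸ M) = φ (p.1 : G ⧸ N) * φ a}

/-- Converse of a relation: `R˘ = {(v,u) : (u,v) ∈ R}`. -/
def conv {α β : Type*} (R : Set (α × β)) : Set (β × α) := {p | (p.2, p.1) ∈ R}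

/-- Relational composition `R ∘ S`. -/
def rcomp {α β γ : Type*} (R : Set (α × β)) (S : Set (β × γ)) : Set (α × γ) :=
  {p | ∃ v, (p.1, v) ∈ R ∧ (v, p.2) ∈ S}

/-- `C` is a left coset of the set `P`. -/
def IsLeftCosetSet [Group G] (P C : Set G) : Prop := ∃ g : G, C = g • P

/-- `Q` is a union of left cosets of the set `P`. -/
def IsUnionOfCosets [Group G] (P Q : Set G) : Prop := ∀ g ∈ Q, g • P ⊆ Q

/-- The union of all atomic relations `R_c` with `⟨c⟩ ⊆ K`. -/
def unionAtoms [Group G] [Group G'] (N : Subgroup G) (M : Subgroup G')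
    [N.Normal] [M.Normal] (φ : G ⧸ N ≃* G' ⧸ M) (K : Set G) : Set (G × G') :=
  ⋃ c ∈ {c : G ⧸ N | cosetOf N c ⊆ K}, atom N M φ c

/-- The union of the coset-shifted relative products over all atoms is the
universal relation `G₁ × G₃`. -/
theorem union_otimes_eq_univ {G₁ G₂ G₃ : Type*} [Group G₁] [Group G₂] [Group G₃]
    (N₁ : Subgroup G₁) (M₁ : Subgroup G₂) (N₂ : Subgroup G₂) (M₂ : Subgroup G₃)
    (N₃ : Subgroup G₁) (M₃ : Subgroup G₃)
    [N₁.Normal] [M₁.Normal] [N₂.Normal] [M₂.Normal] [N₃.Normal] [M₃.Normal]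
    (φ₁ : G₁ ⧸ N₁ ≃* G₂ ⧸ M₁) (φ₂ : G₂ ⧸ N₂ ≃* G₃ ⧸ M₂) (φ₃ : G₁ ⧸ N₃ ≃* G₃ ⧸ M₃)
    (hSF3a : fwd N₁ M₁ φ₁ ((N₁ : Set G₁) * (N₃ : Set G₁)) = (M₁ : Set G₂) * (N₂ : Set G₂))
    (hSF3b : fwd N₂ M₂ φ₂ ((M₁ : Set G₂) * (N₂ : Set G₂)) = (M₃ : Set G₃) * (M₂ : Set G₃))
    (hSF3c : fwd N₃ M₃ φ₃ ((N₁ : Set G₁) * (N₃ : Set G₁)) = (M₃ : Set G₃) * (M₂ : Set G₃))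
    (C : Set G₁) (hC : IsLeftCosetSet ((N₁ : Set G₁) * (N₃ : Set G₁)) C) :
    (⋃ (a : G₁ ⧸ N₁) (b : G₂ ⧸ N₂),
        unionAtoms N₃ M₃ φ₃ (bwd N₁ M₁ φ₁ (cosetOf M₁ (φ₁ a) * cosetOf N₂ b) * C)) =
      (Set.univ : Set (G₁ × G₃)) := by
  obtain ⟨g₀, rfl⟩ := hC
  apply Set.eq_univ_of_forall
  rintro ⟨g, k⟩
  set c : G₁ ⧸ N₃ := ((g : G₁ ⧸ N₃))⁻¹ * φ₃.symm (k : G₃ ⧸ M₃) with hc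
  set x : G₁ := Quotient.out c with hx
  have hxc : (x : G₁ ⧸ N₃) = c := Quotient.out_eq' c
  refine Set.mem_iUnion.mpr ⟨((x * g₀⁻¹ : G₁) : G₁ ⧸ N₁), Set.mem_iUnion.mpr ⟨(1 : G₂ ⧸ N₂), ?_⟩⟩
  refine Set.mem_iUnion₂.mpr ⟨c, ?_, ?_⟩
  · -- cosetOf N₃ c ⊆ bwd ... * (g₀ • P)
    intro y hy
    have hy' : (y : G₁ ⧸ N₃) = (x : G₁ ⧸ N₃) := by rw [hy, hxc]
    have hm : x⁻¹ * y ∈ N₃ := (QuotientGroup.eq ).mp hy'.symm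
    set m : G₁ := x⁻¹ * y with hmdef
    set m' : G₁ := g₀ * m * g₀⁻¹ with hm'def
    have hm' : m' ∈ N₃ := Subgroup.Normal.conj_mem ‹N₃.Normal› m hm g₀
    have hm'P : m' ∈ (N₁ : Set G₁) * (N₃ : Set G₁) :=
      ⟨1, N₁.one_mem, m', hm', one_mul m'⟩
    -- the image class of m'
    have hh₀ : (Quotient.out (φ₁ ((m' : G₁ ⧸ N₁))) : G₂) ∈ (M₁ : Set G₂) * (N₂ : Set G₂) := by
      rw [← hSF3a]
      exact ⟨m', hm'P, (Quotient.out_eq' _).symm⟩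
    obtain ⟨m₁, hm₁, n₂, hn₂, hmn⟩ := hh₀
    set h₀ : G₂ := Quotient.out (φ₁ ((m' : G₁ ⧸ N₁))) with hh₀def
    have hh₀eq : (h₀ : G₂ ⧸ M₁) = φ₁ ((m' : G₁ ⧸ N₁)) := Quotient.out_eq' _
    have hn₂class : (h₀ : G₂ ⧸ M₁) = (n₂ : G₂ ⧸ M₁) := by
      rw [QuotientGroup.eq]
      have : h₀⁻¹ * n₂ = n₂⁻¹ * m₁⁻¹ * n₂ := by rw [← hmn]; group
      rw [this]
      have := Subgroup.Normal.conj_mem ‹M₁.Normal› m₁⁻¹ (M₁.inv_mem hm₁) n₂⁻¹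
      simpa [mul_assoc] using this
    -- y = (y * g₀⁻¹) * g₀
    refine ⟨y * g₀⁻¹, ?_, g₀, ?_, by group⟩
    · -- y * g₀⁻¹ ∈ bwd ...
      refine ⟨Quotient.out (φ₁ ((x * g₀⁻¹ : G₁) : G₁ ⧸ N₁)) * n₂, ?_, ?_⟩
      · exact Set.mul_mem_mul (Quotient.out_eq' _) ((QuotientGroup.eq_one_iff n₂).mpr hn₂)
      · have h1 : ((Quotient.out (φ₁ ((x * g₀⁻¹ : G₁) : G₁ ⧸ N₁)) * n₂ : G₂) : G₂ ⧸ M₁)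
            = φ₁ ((x * g₀⁻¹ : G₁) : G₁ ⧸ N₁) * φ₁ ((m' : G₁ ⧸ N₁)) := by
          have h2 : ((Quotient.out (φ₁ ((x * g₀⁻¹ : G₁) : G₁ ⧸ N₁)) : G₂) : G₂ ⧸ M₁)
              = φ₁ ((x * g₀⁻¹ : G₁) : G₁ ⧸ N₁) := Quotient.out_eq' _
          rw [QuotientGroup.mk_mul, h2, ← hn₂class, hh₀eq]
        rw [h1, ← map_mul, ← QuotientGroup.mk_mul]
        congr 1
        have : y * g₀⁻¹ = x * g₀⁻¹ * m' := by
          rw [hm'def, hmdef]; group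
        rw [this]
    · exact ⟨1, ⟨1, N₁.one_mem, 1, N₃.one_mem, mul_one 1⟩, mul_one g₀⟩
  · -- (g, k) ∈ atom N₃ M₃ φ₃ c
    show (k : G₃ ⧸ M₃) = φ₃ ((g : G₁ ⧸ N₃)) * φ₃ c
    rw [hc, map_mul, map_inv]
    simp

end CosetRA
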